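/- Let H be a complex inner product space and let u, v ∈ H satisfy ‖u‖ = ‖v‖ and u ≠ 0. Then for every nonzero h ∈ H one has (‖u‖⁴ − |⟨u, v⟩|²)/‖u‖² ≥ (|⟨u, h⟩| − |⟨v, h⟩|)²/‖h‖². -/

import Mathlib

open Complex

private lemma key_abs {H : Type*} [NormedAddCommGroup H] [InnerProductSpace ℂ H]
    (u v h : H) (huv : ‖u‖ = ‖v‖) (hu : u ≠ 0) :
    ‖(inner ℂ v h : ℂ)‖ ≤ ‖(inner ℂ u h : ℂ)‖
      + Real.sqrt ((‖u‖ ^ 4 - (‖(inner ℂ u v : ℂ)‖) ^ 2) / ‖u‖ ^ 2) * ‖h‖ := by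
  have hs : (0:ℝ) < ‖u‖ := norm_pos_iff.mpr hu
  set s : ℝ := ‖u‖ with hsdef
  set t : ℝ := ‖(inner ℂ u v : ℂ)‖ with htdef
  have ht : t ≤ s ^ 2 := by
    have := norm_inner_le_norm (𝕜 := ℂ) u v
    simpa [← huv, sq, htdef] using this
  set c : ℂ := (inner ℂ u v : ℂ) / (s^2 : ℝ) with hcdef
  have hcabs : ‖c‖ = t / s ^ 2 := by
    simp [hcdef, htdef, map_div₀, abs_of_pos (pow_pos hs 2)]
  set w : H := v - c • u with hwdef
  have hsplit : (inner ℂ v h : ℂ) = inner ℂ w h + (starRingEnd ℂ) c * inner ℂ u h := by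
    simp [hwdef, inner_sub_left, inner_smul_left]
    ring
  -- norm of w squared
  have hwsq : ‖w‖ ^ 2 = (s ^ 4 - t ^ 2) / s ^ 2 := by
    have h1 : ‖w‖ ^ 2 = ‖v‖ ^ 2 - 2 * Complex.re (inner ℂ v (c • u) : ℂ) + ‖c • u‖ ^ 2 := by
      exact norm_sub_sq (𝕜 := ℂ) v (c • u)
    have h2 : (inner ℂ v (c • u) : ℂ) = c * (starRingEnd ℂ) (inner ℂ u v : ℂ) := by
      rw [inner_smul_right, inner_conj_symm]
    have h3 : c * (starRingEnd ℂ) (inner ℂ u v : ℂ) = ((t ^ 2 / s ^ 2 : ℝ) : ℂ) := by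
      rw [hcdef, div_mul_eq_mul_div, Complex.mul_conj]
      push_cast [Complex.normSq_eq_norm_sq, ← htdef]
      ring
    have h4 : ‖c • u‖ ^ 2 = t ^ 2 / s ^ 2 := by
      rw [norm_smul]
      rw [mul_pow]
      have : ‖c‖ = t / s ^ 2 := hcabs
      rw [this, ← hsdef]
      field_simp
    rw [h1, h2, h3, h4, ← huv]
    simp only [Complex.ofReal_re]
    field_simp
    ring
  have hwnorm : ‖w‖ = Real.sqrt ((s ^ 4 - t ^ 2) / s ^ 2) := by
    rw [← hwsq, Real.sqrt_sq (norm_nonneg w)]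
  calc ‖(inner ℂ v h : ℂ)‖
      = ‖(inner ℂ w h : ℂ) + (starRingEnd ℂ) c * inner ℂ u h‖ := by rw [hsplit]
    _ ≤ ‖(inner ℂ w h : ℂ)‖ + ‖(starRingEnd ℂ) c * inner ℂ u h‖ :=
        norm_add_le _ _
    _ = ‖(inner ℂ w h : ℂ)‖ + ‖c‖ * ‖(inner ℂ u h : ℂ)‖ := by
        rw [norm_mul, Complex.norm_conj]
    _ ≤ ‖w‖ * ‖h‖ + 1 * ‖(inner ℂ u h : ℂ)‖ := by
        gcongr
        · exact norm_inner_le_norm (𝕜 := ℂ) w h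
        · rw [hcabs]
          exact div_le_one_of_le₀ ht (by positivity)
    _ = ‖(inner ℂ u h : ℂ)‖ + Real.sqrt ((s ^ 4 - t ^ 2) / s ^ 2) * ‖h‖ := by
        rw [hwnorm]; ring

/-- **Projection bound for the Malliavin determinant, first form.**
If `u v : H` in a complex inner product space satisfy `‖u‖ = ‖v‖` and `u ≠ 0`,
then for every nonzero `h`,
`(‖u‖⁴ − |⟨u,v⟩|²)/‖u‖² ≥ (|⟨u,h⟩| − |⟨v,h⟩|)²/‖h‖²`. -/
theorem stmt_0 {H : Type*} [NormedAddCommGroup H] [InnerProductSpace ℂ H]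
    (u v : H) (huv : ‖u‖ = ‖v‖) (hu : u ≠ 0) (h : H) (hh : h ≠ 0) :
    (‖(inner ℂ u h : ℂ)‖ - ‖(inner ℂ v h : ℂ)‖) ^ 2 / ‖h‖ ^ 2
      ≤ (‖u‖ ^ 4 - (‖(inner ℂ u v : ℂ)‖) ^ 2) / ‖u‖ ^ 2 := by
  have hs : (0:ℝ) < ‖u‖ := norm_pos_iff.mpr hu
  have hhp : (0:ℝ) < ‖h‖ := norm_pos_iff.mpr hh
  have hv : v ≠ 0 := by
    intro hv0
    rw [hv0, norm_zero] at huv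
    exact hu (norm_eq_zero.mp huv)
  set M : ℝ := Real.sqrt ((‖u‖ ^ 4 - (‖(inner ℂ u v : ℂ)‖) ^ 2) / ‖u‖ ^ 2) with hM
  have ht : ‖(inner ℂ u v : ℂ)‖ ≤ ‖u‖ ^ 2 := by
    have := norm_inner_le_norm (𝕜 := ℂ) u v
    simpa [← huv, sq] using this
  have harg : (0:ℝ) ≤ (‖u‖ ^ 4 - (‖(inner ℂ u v : ℂ)‖) ^ 2) / ‖u‖ ^ 2 := by
    apply div_nonneg _ (by positivity)
    have : (‖(inner ℂ u v : ℂ)‖) ^ 2 ≤ (‖u‖ ^ 2) ^ 2 := by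
      apply pow_le_pow_left₀ (norm_nonneg _) ht
    nlinarith
  have h1 : ‖(inner ℂ v h : ℂ)‖ ≤ ‖(inner ℂ u h : ℂ)‖ + M * ‖h‖ :=
    key_abs u v h huv hu
  have h2 : ‖(inner ℂ u h : ℂ)‖ ≤ ‖(inner ℂ v h : ℂ)‖ + M * ‖h‖ := by
    have := key_abs v u h huv.symm hv
    have heq : ‖(inner ℂ v u : ℂ)‖ = ‖(inner ℂ u v : ℂ)‖ := by
      rw [← inner_conj_symm u v, Complex.norm_conj]
    rw [← huv, heq, ← hM] at this
    exact this
  have hMnn : 0 ≤ M := Real.sqrt_nonneg _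
  have hsq : (‖(inner ℂ u h : ℂ)‖ - ‖(inner ℂ v h : ℂ)‖) ^ 2
      ≤ (M * ‖h‖) ^ 2 := by
    apply sq_le_sq'
    · linarith
    · linarith
  have hM2 : M ^ 2 = (‖u‖ ^ 4 - (‖(inner ℂ u v : ℂ)‖) ^ 2) / ‖u‖ ^ 2 :=
    Real.sq_sqrt harg
  rw [div_le_iff₀ (by positivity), ← hM2]
  calc (‖(inner ℂ u h : ℂ)‖ - ‖(inner ℂ v h : ℂ)‖) ^ 2
      ≤ (M * ‖h‖) ^ 2 := hsq
    _ = M ^ 2 * ‖h‖ ^ 2 := by ring
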